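/- Let ρ_E be a positive definite d×d density matrix with eigenvalues λ₁,…,λ_d > 0, and let λ_h := (Σ_{i=1}^d λ_i^{-1})^{-1}. Let ρ_AB be a d²×d² density matrix on ℂ^d ⊗ ℂ^d with reduced state ρ_B on the second factor, let p₀, p₁ ≥ 0 with p₀ + p₁ = 1 and p₀ ≥ p₁, and let η ∈ [0,1]. Set γ := p₁(1−η) − p₀. If p₁η + γ·λ_h ≤ 0, then Ω_q := p₁η·ρ_AB + γ·(ρ_E ⊗ ρ_B) is negative semidefinite and its trace norm equals p₀ − p₁; consequently P_err = (1 − ‖Ω_q‖₁)/2 equals p₁, for every (pure or mixed) bipartite signal state ρ_AB. -/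

import Mathlib

open Matrix BigOperators Kronecker ComplexOrder

/-- The trace norm of a Hermitian matrix: the sum of the absolute values of its eigenvalues. -/
noncomputable def traceNorm {n : Type*} [Fintype n] [DecidableEq n]
    {A : Matrix n n ℂ} (hA : A.IsHermitian) : ℝ :=
  ∑ i, |hA.eigenvalues i|

namespace RegionIIAux

variable {m n : Type*} [Fintype m] [Fintype n]

lemma sum_dot {ι : Type*} (s : Finset ι) (f : ι → n → ℂ) (w : n → ℂ) :
    (∑ i ∈ s, f i) ⬝ᵥ w = ∑ i ∈ s, (f i) ⬝ᵥ w := by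
  simp only [dotProduct, Finset.sum_apply, Finset.sum_mul]
  exact Finset.sum_comm

lemma mulVec_sum' {ι : Type*} (s : Finset ι) (M : Matrix n n ℂ) (f : ι → n → ℂ) :
    M *ᵥ (∑ i ∈ s, f i) = ∑ i ∈ s, M *ᵥ (f i) := by
  rw [← mulVecLin_apply, map_sum]
  simp [mulVecLin_apply]

lemma dot_sum {ι : Type*} (s : Finset ι) (w : n → ℂ) (f : ι → n → ℂ) :
    w ⬝ᵥ (∑ i ∈ s, f i) = ∑ i ∈ s, w ⬝ᵥ (f i) := by
  simp only [dotProduct, Finset.sum_apply, Finset.mul_sum]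
  exact Finset.sum_comm

lemma herm_swap {M : Matrix n n ℂ} (hM : M.IsHermitian) (x y : n → ℂ) :
    star (star x ⬝ᵥ M *ᵥ y) = star y ⬝ᵥ M *ᵥ x := by
  rw [star_dotProduct, star_star, star_mulVec, ← dotProduct_mulVec, hM.eq]

lemma herm_form_real {M : Matrix n n ℂ} (hM : M.IsHermitian) (x : n → ℂ) :
    star (star x ⬝ᵥ M *ᵥ x) = star x ⬝ᵥ M *ᵥ x :=
  herm_swap hM x x

lemma kron_conjT (A : Matrix m m ℂ) (B : Matrix n n ℂ) : (A ⊗ₖ B)ᴴ = Aᴴ ⊗ₖ Bᴴ := by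
  ext ⟨i, k⟩ ⟨j, l⟩
  simp [conjTranspose_apply, kroneckerMap_apply, star_mul', mul_comm]

lemma psd_smul_real {M : Matrix n n ℂ} (hM : M.PosSemidef) {c : ℝ} (hc : 0 ≤ c) :
    (c • M).PosSemidef := by
  refine posSemidef_iff_dotProduct_mulVec.mpr ⟨?_, ?_⟩
  · unfold Matrix.IsHermitian
    rw [conjTranspose_smul, star_trivial, hM.1.eq]
  · intro x
    rw [smul_mulVec, dotProduct_smul]
    have h0 : (0:ℂ) ≤ (c:ℂ) := by
      rw [Complex.le_def]; simp [hc]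
    have h1 := hM.dotProduct_mulVec_nonneg x
    calc (0:ℂ) = (c:ℂ) * 0 := by ring
      _ ≤ (c:ℂ) * (star x ⬝ᵥ M *ᵥ x) := mul_le_mul_of_nonneg_left h1 h0
      _ = c • (star x ⬝ᵥ M *ᵥ x) := by rw [Complex.real_smul]

lemma kron_psd {A : Matrix m m ℂ} {B : Matrix n n ℂ} [DecidableEq m] [DecidableEq n]
    (hA : A.PosSemidef) (hB : B.PosSemidef) : (A ⊗ₖ B).PosSemidef := by
  set U : Matrix m m ℂ := (hA.1.eigenvectorUnitary : Matrix m m ℂ)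
  set V : Matrix n n ℂ := (hB.1.eigenvectorUnitary : Matrix n n ℂ)
  have hAe : A = U * diagonal (RCLike.ofReal ∘ hA.1.eigenvalues) * Uᴴ := hA.1.spectral_theorem
  have hBe : B = V * diagonal (RCLike.ofReal ∘ hB.1.eigenvalues) * Vᴴ := hB.1.spectral_theorem
  have key : A ⊗ₖ B = (U ⊗ₖ V) *
      (diagonal (RCLike.ofReal ∘ hA.1.eigenvalues) ⊗ₖ diagonal (RCLike.ofReal ∘ hB.1.eigenvalues)) *
      (U ⊗ₖ V)ᴴ := by
    rw [kron_conjT, ← mul_kronecker_mul, ← mul_kronecker_mul, ← hAe, ← hBe]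
  rw [key]
  apply Matrix.PosSemidef.mul_mul_conjTranspose_same
  rw [diagonal_kronecker_diagonal]
  apply Matrix.PosSemidef.diagonal
  intro p
  have h1 : (0:ℝ) ≤ hA.1.eigenvalues p.1 := hA.eigenvalues_nonneg p.1
  have h2 : (0:ℝ) ≤ hB.1.eigenvalues p.2 := hB.eigenvalues_nonneg p.2
  show (0:ℂ) ≤ (hA.1.eigenvalues p.1 : ℂ) * (hB.1.eigenvalues p.2 : ℂ)
  rw [← Complex.ofReal_mul, Complex.le_def]
  simp [mul_nonneg h1 h2]

variable {d : ℕ}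

/-- Embedding of a vector into the `i`-th block. -/
def emb (i : Fin d) (w : Fin d → ℂ) : Fin d × Fin d → ℂ :=
  fun p => if p.1 = i then w p.2 else 0

lemma emb_dot_left (u : Fin d × Fin d → ℂ) (i : Fin d) (v : Fin d → ℂ) :
    star (emb i v) ⬝ᵥ u = ∑ k, star (v k) * u (i, k) := by
  simp only [dotProduct, Pi.star_apply, emb, Fintype.sum_prod_type,
    apply_ite (star : ℂ → ℂ), star_zero, ite_mul, zero_mul]
  rw [Fintype.sum_eq_single i (fun b hb => by simp [hb])]
  simp

lemma emb_mulVec (σ : Matrix (Fin d × Fin d) (Fin d × Fin d) ℂ) (j : Fin d) (w : Fin d → ℂ)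
    (p : Fin d × Fin d) : (σ *ᵥ emb j w) p = ∑ l, σ p (j, l) * w l := by
  simp only [mulVec, dotProduct, emb, Fintype.sum_prod_type, mul_ite, mul_zero]
  rw [Fintype.sum_eq_single j (fun b hb => by simp [hb])]
  simp

lemma emb_dot (σ : Matrix (Fin d × Fin d) (Fin d × Fin d) ℂ) (i j : Fin d) (v w : Fin d → ℂ) :
    star (emb i v) ⬝ᵥ σ *ᵥ (emb j w) = ∑ k, ∑ l, star (v k) * (σ (i, k) (j, l) * w l) := by
  rw [emb_dot_left]
  apply Finset.sum_congr rfl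
  intro k _
  rw [emb_mulVec, Finset.mul_sum]

/-- The quadratic form of the reduced state as a sum of block quadratic forms. -/
lemma tau_form (σ : Matrix (Fin d × Fin d) (Fin d × Fin d) ℂ)
    (τ : Matrix (Fin d) (Fin d) ℂ) (hτ : ∀ k l, τ k l = ∑ i, σ (i, k) (i, l)) (w : Fin d → ℂ) :
    star w ⬝ᵥ τ *ᵥ w = ∑ i, star (emb i w) ⬝ᵥ σ *ᵥ (emb i w) := by
  calc star w ⬝ᵥ τ *ᵥ w
      = ∑ k, star (w k) * ∑ l, τ k l * w l := by
        simp only [dotProduct, mulVec, dotProduct, Pi.star_apply]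
    _ = ∑ k, ∑ l, ∑ i, star (w k) * (σ (i, k) (i, l) * w l) := by
        apply Finset.sum_congr rfl; intro k _
        rw [Finset.mul_sum]
        apply Finset.sum_congr rfl; intro l _
        rw [hτ k l, Finset.sum_mul, Finset.mul_sum]
    _ = ∑ k, ∑ i, ∑ l, star (w k) * (σ (i, k) (i, l) * w l) := by
        apply Finset.sum_congr rfl; intro k _
        exact Finset.sum_comm
    _ = ∑ i, ∑ k, ∑ l, star (w k) * (σ (i, k) (i, l) * w l) := Finset.sum_comm
    _ = ∑ i, star (emb i w) ⬝ᵥ σ *ᵥ (emb i w) :=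
        Finset.sum_congr rfl fun i _ => (emb_dot σ i i w w).symm

/-- Quadratic form of `diagonal μ ⊗ₖ τ`. -/
lemma kron_form (μ : Fin d → ℝ) (τ : Matrix (Fin d) (Fin d) ℂ) (v : Fin d × Fin d → ℂ) :
    star v ⬝ᵥ ((diagonal (fun i => (μ i : ℂ))) ⊗ₖ τ) *ᵥ v
      = ∑ i, (μ i : ℂ) * (star (fun k => v (i, k)) ⬝ᵥ τ *ᵥ (fun k => v (i, k))) := by
  have hmv : ∀ i k, (((diagonal (fun i => (μ i : ℂ))) ⊗ₖ τ) *ᵥ v) (i, k)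
      = ∑ l, (μ i : ℂ) * (τ k l * v (i, l)) := by
    intro i k
    simp only [mulVec, dotProduct, Fintype.sum_prod_type, kroneckerMap_apply,
      diagonal_apply, ite_mul, zero_mul]
    rw [Fintype.sum_eq_single i (fun b hb => by simp [Ne.symm hb])]
    apply Finset.sum_congr rfl
    intro l _
    simp [mul_assoc]
  calc star v ⬝ᵥ ((diagonal (fun i => (μ i : ℂ))) ⊗ₖ τ) *ᵥ v
      = ∑ i, ∑ k, star (v (i, k)) * ∑ l, (μ i : ℂ) * (τ k l * v (i, l)) := by
        simp only [dotProduct, Pi.star_apply, Fintype.sum_prod_type]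
        exact Finset.sum_congr rfl fun i _ => Finset.sum_congr rfl fun k _ => by rw [hmv]
    _ = ∑ i, (μ i : ℂ) * (star (fun k => v (i, k)) ⬝ᵥ τ *ᵥ (fun k => v (i, k))) := by
        apply Finset.sum_congr rfl
        intro i _
        simp only [dotProduct, mulVec, dotProduct, Pi.star_apply, Finset.mul_sum]
        apply Finset.sum_congr rfl
        intro k _
        apply Finset.sum_congr rfl
        intro l _
        ring

/-- **Key lemma** (diagonal environment): `σ ≤ (∑ 1/μᵢ) • (diag μ ⊗ τ)`. -/
lemma diag_key (μ : Fin d → ℝ) (hμ : ∀ i, 0 < μ i)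
    (σ : Matrix (Fin d × Fin d) (Fin d × Fin d) ℂ) (hσ : σ.PosSemidef)
    (τ : Matrix (Fin d) (Fin d) ℂ) (hτ : ∀ k l, τ k l = ∑ i, σ (i, k) (i, l)) :
    ((∑ i, (μ i)⁻¹) • ((diagonal (fun i => (μ i : ℂ))) ⊗ₖ τ) - σ).PosSemidef := by
  set S : ℝ := ∑ i, (μ i)⁻¹ with hS
  have hτH : τ.IsHermitian := by
    unfold Matrix.IsHermitian
    ext k l
    simp only [conjTranspose_apply, hτ]
    rw [star_sum]
    apply Finset.sum_congr rfl
    intro i _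
    exact congrFun (congrFun hσ.1 (i, k)) (i, l)
  have hKH : ((diagonal (fun i => (μ i : ℂ))) ⊗ₖ τ).IsHermitian := by
    unfold Matrix.IsHermitian
    have hstar : (star fun i => ((μ i : ℂ))) = fun i => ((μ i : ℂ)) := by
      funext i
      simp [Complex.conj_ofReal]
    rw [kron_conjT, hτH.eq, diagonal_conjTranspose, hstar]
  have hMH : (S • ((diagonal (fun i => (μ i : ℂ))) ⊗ₖ τ) - σ).IsHermitian := by
    unfold Matrix.IsHermitian
    rw [conjTranspose_sub, conjTranspose_smul, star_trivial, hKH.eq, hσ.1.eq]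
  refine posSemidef_iff_dotProduct_mulVec.mpr ⟨hMH, fun v => ?_⟩
  have hfinal : 0 ≤ (star v ⬝ᵥ (S • ((diagonal (fun i => (μ i : ℂ))) ⊗ₖ τ) - σ) *ᵥ v).re := by
    set x : Fin d → (Fin d × Fin d → ℂ) := fun i => emb i (fun k => v (i, k)) with hx
    have hv : v = ∑ i, x i := by
      funext p
      simp only [hx, emb, Finset.sum_apply]
      rw [Fintype.sum_eq_single p.1 (fun b hb => by simp [Ne.symm hb])]
      simp
    set B : Fin d → Fin d → ℂ := fun i j => star (x i) ⬝ᵥ σ *ᵥ (x j) with hB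
    set Q : Fin d → ℝ := fun i => (B i i).re with hQ
    set R : Fin d → ℝ := fun i =>
      (star (fun k => v (i, k)) ⬝ᵥ τ *ᵥ (fun k => v (i, k))).re with hR
    have hσform : star v ⬝ᵥ σ *ᵥ v = ∑ i, ∑ j, B i j := by
      conv_lhs => rw [hv]
      rw [star_sum, mulVec_sum', sum_dot]
      apply Finset.sum_congr rfl
      intro i _
      rw [dot_sum]
    have hQ0 : ∀ i, 0 ≤ Q i := fun i => hσ.re_dotProduct_nonneg (x i)
    have hQR : ∀ i, Q i ≤ R i := by
      intro i
      have h2 : R i = ∑ j,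
          (star (emb j (fun k => v (i, k))) ⬝ᵥ σ *ᵥ (emb j (fun k => v (i, k)))).re := by
        rw [hR]
        simp only [tau_form σ τ hτ (fun k => v (i, k))]
        rw [Complex.re_sum]
      rw [h2]
      have h3 : Q i
          = (star (emb i (fun k => v (i, k))) ⬝ᵥ σ *ᵥ (emb i (fun k => v (i, k)))).re := rfl
      rw [h3]
      exact Finset.single_le_sum
        (f := fun j => (star (emb j (fun k => v (i, k))) ⬝ᵥ σ *ᵥ (emb j (fun k => v (i, k)))).re)
        (fun j _ => hσ.re_dotProduct_nonneg _) (Finset.mem_univ i)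
    have hBsymm : ∀ i j, (B j i).re = (B i j).re := by
      intro i j
      have h := herm_swap hσ.1 (x i) (x j)
      have : B j i = star (B i j) := by
        simp only [hB]
        exact h.symm
      rw [this, Complex.star_def, Complex.conj_re]
    have hpair : ∀ i j, (B i j).re ≤ (μ i * Q i / μ j + μ j * Q j / μ i) / 2 := by
      intro i j
      have hi := hμ i
      have hj := hμ j
      set y : Fin d × Fin d → ℂ := ((μ i : ℂ)) • x i - ((μ j : ℂ)) • x j with hy
      have hexp : star y ⬝ᵥ σ *ᵥ y
          = (μ i : ℂ) * (μ i : ℂ) * B i i - (μ i : ℂ) * (μ j : ℂ) * B i j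
            - (μ j : ℂ) * (μ i : ℂ) * B j i + (μ j : ℂ) * (μ j : ℂ) * B j j := by
        rw [hy, star_sub, star_smul, star_smul, Complex.star_def, Complex.conj_ofReal,
          Complex.conj_ofReal, Matrix.mulVec_sub, mulVec_smul, mulVec_smul,
          sub_dotProduct, smul_dotProduct, smul_dotProduct, dotProduct_sub, dotProduct_sub,
          dotProduct_smul, dotProduct_smul, dotProduct_smul, dotProduct_smul]
        simp only [smul_eq_mul, hB]
        ring
      have h0 : (0:ℝ) ≤ (star y ⬝ᵥ σ *ᵥ y).re := hσ.re_dotProduct_nonneg y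
      rw [hexp] at h0
      have hre : (((μ i : ℂ)) * (μ i : ℂ) * B i i - (μ i : ℂ) * (μ j : ℂ) * B i j
            - (μ j : ℂ) * (μ i : ℂ) * B j i + (μ j : ℂ) * (μ j : ℂ) * B j j).re
          = μ i * μ i * Q i - μ i * μ j * (B i j).re - μ j * μ i * (B j i).re
            + μ j * μ j * Q j := by
        simp only [Complex.sub_re, Complex.add_re, ← Complex.ofReal_mul, Complex.re_ofReal_mul]
        rfl
      rw [hre, hBsymm i j] at h0
      have hij : 0 < μ i * μ j := mul_pos hi hj
      rw [show μ i * Q i / μ j + μ j * Q j / μ i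
          = (μ i * μ i * Q i + μ j * μ j * Q j) / (μ i * μ j) by field_simp]
      rw [div_div, le_div_iff₀ (by positivity : (0:ℝ) < μ i * μ j * 2)]
      nlinarith [h0]
    have hsum1 : ∑ i, ∑ j, (B i j).re ≤ S * ∑ i, μ i * Q i := by
      have h1 : ∑ i, ∑ j, (B i j).re
          ≤ ∑ i, ∑ j, (μ i * Q i / μ j + μ j * Q j / μ i) / 2 :=
        Finset.sum_le_sum fun i _ => Finset.sum_le_sum fun j _ => hpair i j
      have hsw : (∑ i : Fin d, ∑ j : Fin d, μ j * Q j / μ i / 2)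
          = ∑ i : Fin d, ∑ j : Fin d, μ i * Q i / μ j / 2 := Finset.sum_comm
      have h2 : ∑ i : Fin d, ∑ j : Fin d, (μ i * Q i / μ j + μ j * Q j / μ i) / 2
          = S * ∑ i, μ i * Q i := by
        calc ∑ i : Fin d, ∑ j : Fin d, (μ i * Q i / μ j + μ j * Q j / μ i) / 2
            = (∑ i : Fin d, ∑ j : Fin d, μ i * Q i / μ j / 2)
              + ∑ i : Fin d, ∑ j : Fin d, μ j * Q j / μ i / 2 := by
              rw [← Finset.sum_add_distrib]
              apply Finset.sum_congr rfl; intro i _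
              rw [← Finset.sum_add_distrib]
              apply Finset.sum_congr rfl; intro j _
              ring
          _ = ∑ i : Fin d, ∑ j : Fin d, μ i * Q i / μ j := by
              rw [hsw, ← Finset.sum_add_distrib]
              apply Finset.sum_congr rfl; intro i _
              rw [← Finset.sum_add_distrib]
              apply Finset.sum_congr rfl; intro j _
              ring
          _ = ∑ j : Fin d, ∑ i : Fin d, μ i * Q i / μ j := Finset.sum_comm
          _ = ∑ j : Fin d, (μ j)⁻¹ * ∑ i, μ i * Q i := by
              apply Finset.sum_congr rfl; intro j _
              rw [Finset.mul_sum]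
              apply Finset.sum_congr rfl; intro i _
              rw [div_eq_mul_inv]; ring
          _ = S * ∑ i, μ i * Q i := by
              rw [hS, Finset.sum_mul]
      linarith
    have hform : (star v ⬝ᵥ (S • ((diagonal (fun i => (μ i : ℂ))) ⊗ₖ τ) - σ) *ᵥ v).re
        = S * (∑ i, μ i * R i) - ∑ i, ∑ j, (B i j).re := by
      rw [Matrix.sub_mulVec, dotProduct_sub, Complex.sub_re, hσform]
      congr 1
      · rw [smul_mulVec, dotProduct_smul, Complex.real_smul, Complex.re_ofReal_mul]
        congr 1
        rw [kron_form, Complex.re_sum]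
        apply Finset.sum_congr rfl
        intro i _
        rw [Complex.re_ofReal_mul]
      · rw [Complex.re_sum]
        apply Finset.sum_congr rfl
        intro i _
        rw [Complex.re_sum]
    have hS0 : 0 ≤ S := Finset.sum_nonneg fun i _ => le_of_lt (inv_pos.mpr (hμ i))
    rw [hform]
    have h3 : ∑ i, μ i * Q i ≤ ∑ i, μ i * R i :=
      Finset.sum_le_sum fun i _ => mul_le_mul_of_nonneg_left (hQR i) (le_of_lt (hμ i))
    have h4 := mul_le_mul_of_nonneg_left h3 hS0
    linarith
  have hreal := herm_form_real hMH v
  rw [Complex.le_def]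
  refine ⟨by simpa using hfinal, ?_⟩
  have h := congrArg Complex.im hreal
  simp only [Complex.star_def, Complex.conj_im] at h
  simp only [Complex.zero_im]
  linarith

lemma psd_add {M N : Matrix n n ℂ} (hM : M.PosSemidef) (hN : N.PosSemidef) :
    (M + N).PosSemidef := by
  refine posSemidef_iff_dotProduct_mulVec.mpr ⟨hM.1.add hN.1, fun x => ?_⟩
  rw [Matrix.add_mulVec, dotProduct_add]
  exact add_nonneg (hM.dotProduct_mulVec_nonneg x) (hN.dotProduct_mulVec_nonneg x)

/-- Reduced state of a PSD matrix is PSD. -/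
lemma red_psd (σ : Matrix (Fin d × Fin d) (Fin d × Fin d) ℂ) (hσ : σ.PosSemidef)
    (τ : Matrix (Fin d) (Fin d) ℂ) (hτ : ∀ k l, τ k l = ∑ i, σ (i, k) (i, l)) :
    τ.PosSemidef := by
  refine posSemidef_iff_dotProduct_mulVec.mpr ⟨?_, ?_⟩
  · unfold Matrix.IsHermitian
    ext k l
    simp only [conjTranspose_apply, hτ]
    rw [star_sum]
    apply Finset.sum_congr rfl
    intro i _
    exact congrFun (congrFun hσ.1 (i, k)) (i, l)
  · intro w
    rw [tau_form σ τ hτ w]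
    exact Finset.sum_nonneg fun i _ => hσ.dotProduct_mulVec_nonneg _

/-- A partial-trace entry as a full trace against `1 ⊗ₖ Matrix.single`. -/
lemma red_trace (M : Matrix (Fin d × Fin d) (Fin d × Fin d) ℂ) (k l : Fin d) :
    (∑ i, M (i, k) (i, l))
      = (M * ((1 : Matrix (Fin d) (Fin d) ℂ) ⊗ₖ Matrix.single l k 1)).trace := by
  simp only [Matrix.trace, Matrix.diag, Matrix.mul_apply, kroneckerMap_apply,
    Matrix.one_apply, Matrix.single, Matrix.of_apply, Fintype.sum_prod_type,
    mul_ite, mul_zero, mul_one, ite_mul, zero_mul, one_mul]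
  rw [Finset.sum_comm]
  rw [Fintype.sum_eq_single k (fun y hy => Finset.sum_eq_zero fun x _ =>
    Finset.sum_eq_zero fun x1 _ => Finset.sum_eq_zero fun x2 _ => by simp [Ne.symm hy])]
  simp [Finset.sum_ite_eq, Finset.sum_ite_eq']

end RegionIIAux

open RegionIIAux in
set_option maxHeartbeats 1000000 in
/-- **Region II, quantum illumination.** -/
theorem region_II_quantum {d : ℕ}
    (ρE : Matrix (Fin d) (Fin d) ℂ) (hE : ρE.PosDef) (hEtr : ρE.trace = 1)
    (lamH : ℝ) (hlamH : lamH = (∑ i, (hE.1.eigenvalues i)⁻¹)⁻¹)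
    (ρAB : Matrix (Fin d × Fin d) (Fin d × Fin d) ℂ)
    (hAB : ρAB.PosSemidef) (hABtr : ρAB.trace = 1)
    (ρB : Matrix (Fin d) (Fin d) ℂ)
    (hρB : ρB = Matrix.of fun k l => ∑ i, ρAB (i, k) (i, l))
    (p₀ p₁ η : ℝ) (hp₀ : 0 ≤ p₀) (hp₁ : 0 ≤ p₁) (hsum : p₀ + p₁ = 1)
    (hp : p₁ ≤ p₀) (hη₀ : 0 ≤ η) (hη₁ : η ≤ 1)
    (hcond : p₁ * η + (p₁ * (1 - η) - p₀) * lamH ≤ 0)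
    (hΩ : ((p₁ * η) • ρAB + (p₁ * (1 - η) - p₀) • (ρE ⊗ₖ ρB)).IsHermitian) :
    (-((p₁ * η) • ρAB + (p₁ * (1 - η) - p₀) • (ρE ⊗ₖ ρB))).PosSemidef ∧
      traceNorm hΩ = p₀ - p₁ ∧
      (1 - traceNorm hΩ) / 2 = p₁ := by
  have hd : 0 < d := by
    rcases Nat.eq_zero_or_pos d with h | h
    · subst h
      exact absurd hEtr (by simp [Matrix.trace])
    · exact h
  set a : ℝ := p₁ * η with ha_def
  set γ : ℝ := p₁ * (1 - η) - p₀ with hγ_def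
  set μ : Fin d → ℝ := hE.1.eigenvalues with hμ_def
  have hμ : ∀ i, 0 < μ i := fun i => hE.eigenvalues_pos i
  set S : ℝ := ∑ i, (μ i)⁻¹ with hS_def
  have hSpos : 0 < S := Finset.sum_pos (fun i _ => inv_pos.mpr (hμ i))
    (Finset.univ_nonempty_iff.mpr ⟨⟨0, hd⟩⟩)
  have ha : 0 ≤ a := mul_nonneg hp₁ hη₀
  have hγ : γ ≤ 0 := by nlinarith
  have hcond' : a * S + γ ≤ 0 := by
    have h1 := mul_le_mul_of_nonneg_right hcond (le_of_lt hSpos)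
    rw [add_mul, zero_mul, hlamH] at h1
    have h2 : γ * S⁻¹ * S = γ := by field_simp
    have h3 : a * S = a * S := rfl
    nlinarith [h1, h2]
  -- spectral data of the environment
  set U : Matrix (Fin d) (Fin d) ℂ := (hE.1.eigenvectorUnitary : Matrix (Fin d) (Fin d) ℂ)
    with hU_def
  set D : Matrix (Fin d) (Fin d) ℂ := diagonal (fun i => (μ i : ℂ)) with hD_def
  have hEdec : ρE = U * D * Uᴴ := by
    have h := hE.1.spectral_theorem
    rw [← Matrix.star_eq_conjTranspose]
    exact h
  have hUU : U * Uᴴ = 1 := by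
    rw [← Matrix.star_eq_conjTranspose]
    exact Matrix.mem_unitaryGroup_iff.mp hE.1.eigenvectorUnitary.2
  have hUHU : Uᴴ * U = 1 := by
    rw [← Matrix.star_eq_conjTranspose]
    exact Matrix.mem_unitaryGroup_iff'.mp hE.1.eigenvectorUnitary.2
  set W : Matrix (Fin d × Fin d) (Fin d × Fin d) ℂ := U ⊗ₖ (1 : Matrix (Fin d) (Fin d) ℂ)
    with hW_def
  have hWH : Wᴴ = Uᴴ ⊗ₖ (1 : Matrix (Fin d) (Fin d) ℂ) := by
    rw [hW_def, kron_conjT, conjTranspose_one]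
  have hWWH : W * Wᴴ = 1 := by
    rw [hWH, hW_def, ← mul_kronecker_mul, hUU, Matrix.one_mul, one_kronecker_one]
  have hWHW : Wᴴ * W = 1 := by
    rw [hWH, hW_def, ← mul_kronecker_mul, hUHU, Matrix.one_mul, one_kronecker_one]
  set σ : Matrix (Fin d × Fin d) (Fin d × Fin d) ℂ := Wᴴ * ρAB * W with hσ_def
  have hσpsd : σ.PosSemidef := hAB.conjTranspose_mul_mul_same W
  -- σ has the same reduced state ρB
  have hred : ∀ k l, ρB k l = ∑ i, σ (i, k) (i, l) := by
    intro k l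
    have hconj : W * ((1 : Matrix (Fin d) (Fin d) ℂ) ⊗ₖ Matrix.single l k 1) * Wᴴ
        = (1 : Matrix (Fin d) (Fin d) ℂ) ⊗ₖ Matrix.single l k 1 := by
      rw [hWH, hW_def, ← mul_kronecker_mul, ← mul_kronecker_mul, Matrix.one_mul,
        Matrix.mul_one, hUU, Matrix.mul_one]
    rw [red_trace σ k l, hρB]
    show (∑ i, ρAB (i, k) (i, l)) = _
    rw [red_trace ρAB k l]
    rw [hσ_def]
    calc (ρAB * (1 ⊗ₖ Matrix.single l k 1)).trace
        = (ρAB * (W * (1 ⊗ₖ Matrix.single l k 1) * Wᴴ)).trace := by rw [hconj]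
      _ = ((W * (1 ⊗ₖ Matrix.single l k 1) * Wᴴ) * ρAB).trace := Matrix.trace_mul_comm _ _
      _ = ((W * (1 ⊗ₖ Matrix.single l k 1)) * (Wᴴ * ρAB)).trace := by
          rw [Matrix.mul_assoc, Matrix.mul_assoc]
      _ = ((Wᴴ * ρAB) * (W * (1 ⊗ₖ Matrix.single l k 1))).trace := Matrix.trace_mul_comm _ _
      _ = (Wᴴ * ρAB * W * (1 ⊗ₖ Matrix.single l k 1)).trace := by
          rw [Matrix.mul_assoc (Wᴴ * ρAB)]
  -- the key inequality, conjugated back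
  have hdiag : (S • (D ⊗ₖ ρB) - σ).PosSemidef := diag_key μ hμ σ hσpsd ρB hred
  have hconjeq : W * (S • (D ⊗ₖ ρB) - σ) * Wᴴ = S • (ρE ⊗ₖ ρB) - ρAB := by
    rw [Matrix.mul_sub, Matrix.sub_mul]
    congr 1
    · rw [mul_smul_comm, smul_mul_assoc]
      congr 1
      rw [hWH, hW_def, ← mul_kronecker_mul, ← mul_kronecker_mul, Matrix.one_mul,
        Matrix.mul_one, ← hEdec]
    · rw [hσ_def, ← Matrix.mul_assoc, ← Matrix.mul_assoc, hWWH, Matrix.one_mul,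
        Matrix.mul_assoc, hWWH, Matrix.mul_one]
  have hK : (S • (ρE ⊗ₖ ρB) - ρAB).PosSemidef := by
    rw [← hconjeq]
    exact hdiag.mul_mul_conjTranspose_same W
  have hρBpsd : ρB.PosSemidef := red_psd ρAB hAB ρB (fun k l => by rw [hρB]; rfl)
  have hkron : (ρE ⊗ₖ ρB).PosSemidef := kron_psd hE.posSemidef hρBpsd
  have hdecomp : -(a • ρAB + γ • (ρE ⊗ₖ ρB))
      = a • (S • (ρE ⊗ₖ ρB) - ρAB) + (-γ - a * S) • (ρE ⊗ₖ ρB) := by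
    ext p q
    simp only [Matrix.neg_apply, Matrix.add_apply, Matrix.smul_apply, Matrix.sub_apply,
      smul_eq_mul, Complex.real_smul]
    push_cast
    ring
  have hnegΩ : (-(a • ρAB + γ • (ρE ⊗ₖ ρB))).PosSemidef := by
    rw [hdecomp]
    exact psd_add (psd_smul_real hK ha) (psd_smul_real hkron (by linarith))
  have htn : traceNorm hΩ = p₀ - p₁ := by
    have hev : ∀ i, hΩ.eigenvalues i ≤ 0 := by
      intro i
      have h1 := hΩ.eigenvalues_eq i
      have h2 := hnegΩ.re_dotProduct_nonneg (⇑(hΩ.eigenvectorBasis i))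
      rw [Matrix.neg_mulVec, dotProduct_neg, map_neg] at h2
      rw [h1]
      linarith
    -- trace of Ω two ways
    have htrB : ρB.trace = 1 := by
      rw [hρB]
      show (∑ k, ∑ i, ρAB (i, k) (i, k)) = 1
      rw [Finset.sum_comm]
      rw [← hABtr]
      show _ = ∑ p : Fin d × Fin d, ρAB p p
      rw [Fintype.sum_prod_type]
    have htr1 : (a • ρAB + γ • (ρE ⊗ₖ ρB)).trace = ((p₁ - p₀ : ℝ) : ℂ) := by
      rw [Matrix.trace_add, Matrix.trace_smul, Matrix.trace_smul, trace_kronecker,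
        hEtr, hABtr, htrB, mul_one, Complex.real_smul, Complex.real_smul]
      push_cast
      rw [ha_def, hγ_def]
      push_cast
      ring
    have htr2 : (a • ρAB + γ • (ρE ⊗ₖ ρB)).trace = ((∑ i, hΩ.eigenvalues i : ℝ) : ℂ) := by
      conv_lhs => rw [hΩ.spectral_theorem, Unitary.conjStarAlgAut_apply]
      rw [Matrix.trace_mul_cycle]
      rw [show (star (hΩ.eigenvectorUnitary : Matrix (Fin d × Fin d) (Fin d × Fin d) ℂ)) *
        (hΩ.eigenvectorUnitary : Matrix (Fin d × Fin d) (Fin d × Fin d) ℂ) = 1 from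
        Matrix.mem_unitaryGroup_iff'.mp hΩ.eigenvectorUnitary.2]
      rw [Matrix.one_mul, Matrix.trace_diagonal]
      push_cast
      rfl
    have hsumev : ∑ i, hΩ.eigenvalues i = p₁ - p₀ := by
      have := htr1.symm.trans htr2
      exact_mod_cast this.symm
    show (∑ i, |hΩ.eigenvalues i|) = p₀ - p₁
    rw [Finset.sum_congr rfl fun i _ => abs_of_nonpos (hev i)]
    rw [Finset.sum_neg_distrib, hsumev]
    ring
  exact ⟨hnegΩ, htn, by rw [htn]; linarith⟩
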